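/- (Corollary 1.) Let x(0) be an ordered initial profile with max Δx(0) > 0, let range(x(0)) := x_n(0) − x_1(0), and set m := ⌈range(x(0)) / max Δx(0)⌉. Then max_{i∈{1,…,n−1}} Σ_{j=0}^{i−1} μ^j · Δx_{i−j}(0) ≤ ((1 − μ^m)/(1 − μ)) · max Δx(0); consequently, if ε > ((1 − μ^m)/(1 − μ)) · max Δx(0), the phone chain of closest drives the process to consensus. -/

import Mathlib

open Filter

/-- One step of the Weisbuch–Deffuant update applied by agents `i` and `j`. -/
noncomputable def wdStep {n : ℕ} (ε μ : ℝ) (i j : Fin n) (x : Fin n → ℝ) : Fin n → ℝ :=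
  if |x i - x j| < ε then
    Function.update (Function.update x i ((1 - μ) * x i + μ * x j)) j
      (μ * x i + (1 - μ) * x j)
  else x

/-- Trajectory of the WD model under a communication regime. -/
noncomputable def wdTraj {n : ℕ} (ε μ : ℝ) (regime : ℕ → Fin n × Fin n)
    (x0 : Fin n → ℝ) : ℕ → Fin n → ℝ
  | 0 => x0
  | t + 1 => wdStep ε μ (regime t).1 (regime t).2 (wdTraj ε μ regime x0 t)

/-- Gap between the opinions of agents `i+1` and `i` (0-based). -/
def gap {n : ℕ} (x : Fin n → ℝ) (i : Fin (n - 1)) : ℝ :=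
  x ⟨(i : ℕ) + 1, by have := i.isLt; omega⟩ - x ⟨(i : ℕ), by have := i.isLt; omega⟩

/-- Maximal gap of a profile. -/
noncomputable def maxGap {n : ℕ} (x : Fin n → ℝ) : ℝ := ⨆ i : Fin (n - 1), gap x i

/-- The phone chain of closest: at step `t` the pair (0-based) is
`(t mod (n-1), t mod (n-1) + 1)`. -/
def phoneChain (n : ℕ) (hn : 2 ≤ n) (t : ℕ) : Fin n × Fin n :=
  (⟨t % (n - 1), by have := Nat.mod_lt t (show 0 < n - 1 by omega); omega⟩,
   ⟨t % (n - 1) + 1, by have := Nat.mod_lt t (show 0 < n - 1 by omega); omega⟩)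

/-- `chainBound μ x0 i` is `Σ_{j=0}^{i} μ^j · Δx_{i-j}` (0-based), the paper's
`Σ_{j=0}^{i-1} μ^j Δx_{i-j}(0)` for the 1-based index `i+1`. -/
noncomputable def chainBound {n : ℕ} (μ : ℝ) (x0 : Fin n → ℝ) (i : Fin (n - 1)) : ℝ :=
  ∑ j ∈ Finset.range ((i : ℕ) + 1), μ ^ j * gap x0 ⟨(i : ℕ) - j, by
    have := i.isLt; omega⟩

/-- Padding a profile to a function on `ℕ` (helper). -/
noncomputable def padded {n : ℕ} (x : Fin n → ℝ) (v : ℕ) : ℝ :=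
  if hv : v < n then x ⟨v, hv⟩ else 0

lemma padded_eq {n : ℕ} (x : Fin n → ℝ) (v : ℕ) (hv : v < n) : x ⟨v, hv⟩ = padded x v := by
  simp [padded, hv]

section WDaux
variable {n : ℕ}

lemma gap_nonneg {x : Fin n → ℝ} (h : Monotone x) (i : Fin (n - 1)) : 0 ≤ gap x i := by
  have := h (show (⟨(i : ℕ), by have := i.isLt; omega⟩ : Fin n) ≤ ⟨(i : ℕ) + 1, by have := i.isLt; omega⟩
    from by simp [Fin.mk_le_mk])
  simpa [gap, sub_nonneg] using this

lemma monotone_of_gap {x : Fin n → ℝ} (hn : 2 ≤ n) (h : ∀ i : Fin (n - 1), 0 ≤ gap x i) :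
    Monotone x := by
  have key : ∀ d k, (hk : k + d < n) → x ⟨k, by omega⟩ ≤ x ⟨k + d, hk⟩ := by
    intro d
    induction d with
    | zero => intro k hk; exact le_of_eq rfl
    | succ d ih =>
      intro k hk
      have h1 : x ⟨k, by omega⟩ ≤ x ⟨k + d, by omega⟩ := ih k (by omega)
      have h2 : 0 ≤ gap x ⟨k + d, by omega⟩ := h ⟨k + d, by omega⟩
      have : x ⟨k + d, by omega⟩ ≤ x ⟨k + d + 1, by omega⟩ := by
        unfold gap at h2; linarith
      exact h1.trans this
  intro a b hab
  have hab' : (a : ℕ) ≤ b := hab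
  have h1 := key ((b : ℕ) - a) (a : ℕ) (by omega)
  have e1 : (⟨(a : ℕ), by omega⟩ : Fin n) = a :=rfl
  have e2 : (⟨(a : ℕ) + ((b : ℕ) - a), by omega⟩ : Fin n) = b := Fin.ext (by simp; omega)
  rwa [e1, e2] at h1

end WDaux

section WDaux2
variable {n : ℕ}

lemma wdStep_apply {ε μ : ℝ} {r : ℕ} (hr : r + 1 < n) (x : Fin n → ℝ)
    (h : |x ⟨r, by omega⟩ - x ⟨r + 1, hr⟩| < ε) (l : Fin n) :
    wdStep ε μ ⟨r, by omega⟩ ⟨r + 1, hr⟩ x l =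
      if (l : ℕ) = r then (1 - μ) * x ⟨r, by omega⟩ + μ * x ⟨r + 1, hr⟩
      else if (l : ℕ) = r + 1 then μ * x ⟨r, by omega⟩ + (1 - μ) * x ⟨r + 1, hr⟩
      else x l := by
  rw [wdStep, if_pos h]
  by_cases h1 : l = (⟨r + 1, hr⟩ : Fin n)
  · subst h1
    rw [Function.update_self]
    simp
  · rw [Function.update_of_ne h1]
    by_cases h2 : l = (⟨r, by omega⟩ : Fin n)
    · subst h2
      rw [Function.update_self]
      simp [Nat.ne_of_lt (by omega : r < r + 1)]
    · rw [Function.update_of_ne h2]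
      have e1 : (l : ℕ) ≠ r := fun hc => h2 (Fin.ext hc)
      have e2 : (l : ℕ) ≠ r + 1 := fun hc => h1 (Fin.ext hc)
      simp [e1, e2]

lemma gap_wdStep {ε μ : ℝ} {r : ℕ} (hr : r < n - 1) (x : Fin n → ℝ)
    (h : |x ⟨r, by omega⟩ - x ⟨r + 1, by omega⟩| < ε) (q : Fin (n - 1)) :
    gap (wdStep ε μ ⟨r, by omega⟩ ⟨r + 1, by omega⟩ x) q =
      if (q : ℕ) = r then (1 - 2 * μ) * gap x ⟨r, hr⟩
      else if (q : ℕ) + 1 = r ∨ (q : ℕ) = r + 1 then gap x q + μ * gap x ⟨r, hr⟩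
      else gap x q := by
  have hq := q.isLt
  unfold gap
  rw [wdStep_apply (by omega) x h, wdStep_apply (by omega) x h]
  simp only [Fin.val_mk, padded_eq]
  split_ifs
  all_goals try omega
  all_goals try ring
  all_goals
    first
      | (rw [show r = (q : ℕ) + 1 by omega]; ring_nf)
      | (rw [show (q : ℕ) = r + 1 by omega]; ring_nf)

end WDaux2

section WDaux3
variable {n : ℕ}

/-- The gap function extended to `ℕ` (helper). -/
noncomputable def gapN {n : ℕ} (x : Fin n → ℝ) (v : ℕ) : ℝ :=
  if hv : v < n - 1 then gap x ⟨v, hv⟩ else 0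

lemma gapN_eq (x : Fin n → ℝ) (v : ℕ) (hv : v < n - 1) : gap x ⟨v, hv⟩ = gapN x v := by
  simp [gapN, hv]

lemma gapN_coe (x : Fin n → ℝ) (i : Fin (n - 1)) : gap x i = gapN x (i : ℕ) := by
  rw [show i = ⟨(i : ℕ), i.isLt⟩ from rfl, gapN_eq]

lemma gapN_nonneg {x : Fin n → ℝ} (h : Monotone x) (v : ℕ) : 0 ≤ gapN x v := by
  unfold gapN; split
  · exact gap_nonneg h _
  · exact le_refl 0

/-- Partial chain sum seen by the pair `(r, r+1)` (helper). -/
noncomputable def seen {n : ℕ} (μ : ℝ) (x : Fin n → ℝ) (r : ℕ) (i : Fin (n - 1)) : ℝ :=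
  ∑ j ∈ Finset.range ((i : ℕ) - r + 1), μ ^ j * gapN x ((i : ℕ) - j)

lemma chainBound_eq_seen (μ : ℝ) (x : Fin n → ℝ) (i : Fin (n - 1)) :
    chainBound μ x i = seen μ x 0 i := by
  unfold chainBound seen
  exact Finset.sum_congr rfl fun j hj => by rw [gapN_eq]

lemma seen_self (μ : ℝ) (x : Fin n → ℝ) (r : ℕ) (i : Fin (n - 1)) (h : (i : ℕ) = r) :
    seen μ x r i = gapN x r := by
  unfold seen
  rw [h, Nat.sub_self]
  simp

end WDaux3

section WDaux4
variable {n : ℕ}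

lemma gapN_wdStep {ε μ : ℝ} {r : ℕ} (hr : r < n - 1) (x : Fin n → ℝ)
    (h : |x ⟨r, by omega⟩ - x ⟨r + 1, by omega⟩| < ε) (v : ℕ) (hv : v < n - 1) :
    gapN (wdStep ε μ ⟨r, by omega⟩ ⟨r + 1, by omega⟩ x) v =
      if v = r then (1 - 2 * μ) * gapN x r
      else if v + 1 = r ∨ v = r + 1 then gapN x v + μ * gapN x r
      else gapN x v := by
  rw [← gapN_eq _ v hv, gap_wdStep hr x h ⟨v, hv⟩]
  simp only [Fin.val_mk, gapN_eq]

lemma sweep_inv (hn : 2 ≤ n) {ε μ : ℝ} (hμ0 : 0 < μ) (hμ2 : μ ≤ 1 / 2) {C : ℝ}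
    (hC : C < ε) (x0 : Fin n → ℝ) (t0 : ℕ) (ht0 : t0 % (n - 1) = 0)
    (hmono : Monotone (wdTraj ε μ (phoneChain n hn) x0 t0))
    (hbd : ∀ i, chainBound μ (wdTraj ε μ (phoneChain n hn) x0 t0) i ≤ C) :
    ∀ r, ∀ _hr : r ≤ n - 1,
      Monotone (wdTraj ε μ (phoneChain n hn) x0 (t0 + r)) ∧
      (∀ i : Fin (n - 1), ∀ _hi : r ≤ (i : ℕ),
        seen μ (wdTraj ε μ (phoneChain n hn) x0 (t0 + r)) r i
          = chainBound μ (wdTraj ε μ (phoneChain n hn) x0 t0) i) ∧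
      (∀ v : ℕ, ∀ _hv : v + 1 < r,
        gapN (wdTraj ε μ (phoneChain n hn) x0 (t0 + r)) v
          = (1 - 2 * μ) * chainBound μ (wdTraj ε μ (phoneChain n hn) x0 t0) ⟨v, by omega⟩
            + μ * chainBound μ (wdTraj ε μ (phoneChain n hn) x0 t0) ⟨v + 1, by omega⟩) ∧
      (∀ v : ℕ, ∀ _hv : v + 1 = r,
        gapN (wdTraj ε μ (phoneChain n hn) x0 (t0 + r)) v
          = (1 - 2 * μ) * chainBound μ (wdTraj ε μ (phoneChain n hn) x0 t0) ⟨v, by omega⟩) := by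
  set y := wdTraj ε μ (phoneChain n hn) x0 t0 with hy
  intro r
  induction r with
  | zero =>
    intro _
    refine ⟨by simpa using hmono, fun i _ => (chainBound_eq_seen μ y i).symm, ?_, ?_⟩
    · intro v hv; omega
    · intro v hv; omega
  | succ r ih =>
    intro hr1
    obtain ⟨hmx, hseen, hgap3, hgap4⟩ := ih (by omega)
    set x := wdTraj ε μ (phoneChain n hn) x0 (t0 + r) with hx
    have hrlt : r < n - 1 := by omega
    have hmod : (t0 + r) % (n - 1) = r := by
      obtain ⟨a, ha⟩ := Nat.dvd_of_mod_eq_zero ht0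
      rw [ha, Nat.mul_comm (n - 1) a, Nat.add_comm]
      rw [Nat.add_mul_mod_self_right]
      exact Nat.mod_eq_of_lt hrlt
    have hpc : phoneChain n hn (t0 + r) = (⟨r, by omega⟩, ⟨r + 1, by omega⟩) := by
      unfold phoneChain
      simp only [hmod]
    have hstep : wdTraj ε μ (phoneChain n hn) x0 (t0 + (r + 1))
        = wdStep ε μ ⟨r, by omega⟩ ⟨r + 1, by omega⟩ x := by
      show wdTraj ε μ (phoneChain n hn) x0 ((t0 + r) + 1) = _
      rw [wdTraj, hpc]
    have hgapr : gapN x r = chainBound μ y ⟨r, hrlt⟩ := by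
      rw [← hseen ⟨r, hrlt⟩ (le_refl r), seen_self μ x r ⟨r, hrlt⟩ rfl]
    have hDnn : 0 ≤ gapN x r := gapN_nonneg hmx r
    have hDlt : gapN x r < ε := lt_of_le_of_lt (hgapr ▸ hbd ⟨r, hrlt⟩) hC
    have habs : |x ⟨r, by omega⟩ - x ⟨r + 1, by omega⟩| < ε := by
      rw [abs_sub_comm]
      have e : x ⟨r + 1, by omega⟩ - x ⟨r, by omega⟩ = gap x ⟨r, hrlt⟩ := rfl
      rw [e, gapN_eq, abs_of_nonneg hDnn]
      exact hDlt
    have hgw : ∀ (v : ℕ), v < n - 1 →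
        gapN (wdTraj ε μ (phoneChain n hn) x0 (t0 + (r + 1))) v =
          if v = r then (1 - 2 * μ) * gapN x r
          else if v + 1 = r ∨ v = r + 1 then gapN x v + μ * gapN x r
          else gapN x v := by
      intro v hv
      rw [hstep]
      exact gapN_wdStep hrlt x habs v hv
    have h2μ : 0 ≤ 1 - 2 * μ := by linarith
    refine ⟨?_, ?_, ?_, ?_⟩
    · -- monotone
      apply monotone_of_gap hn
      intro q
      rw [gapN_coe, hgw (q : ℕ) q.isLt]
      split_ifs
      · exact mul_nonneg h2μ hDnn
      · exact add_nonneg (gapN_nonneg hmx _) (mul_nonneg hμ0.le hDnn)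
      · exact gapN_nonneg hmx _
    · -- seen invariance
      intro i hi
      have hIH := hseen i (by omega)
      unfold seen at hIH ⊢
      have hsplit : (i : ℕ) - r + 1 = ((i : ℕ) - (r + 1) + 1) + 1 := by omega
      rw [hsplit, Finset.sum_range_succ] at hIH
      have hidx : (i : ℕ) - ((i : ℕ) - (r + 1) + 1) = r := by omega
      rw [hidx] at hIH
      have hsum : ∑ j ∈ Finset.range ((i : ℕ) - (r + 1) + 1),
          μ ^ j * gapN (wdTraj ε μ (phoneChain n hn) x0 (t0 + (r + 1))) ((i : ℕ) - j)
          = ∑ j ∈ Finset.range ((i : ℕ) - (r + 1) + 1),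
            (μ ^ j * gapN x ((i : ℕ) - j)
              + if j = (i : ℕ) - (r + 1) then μ ^ j * (μ * gapN x r) else 0) := by
        refine Finset.sum_congr rfl fun j hj => ?_
        rw [Finset.mem_range] at hj
        rw [hgw ((i : ℕ) - j) (by have := i.isLt; omega)]
        rw [if_neg (by omega)]
        by_cases hj' : j = (i : ℕ) - (r + 1)
        · rw [if_pos (Or.inr (by omega)), if_pos hj']
          ring
        · rw [if_neg (by omega), if_neg hj']
          ring
      rw [hsum, Finset.sum_add_distrib, Finset.sum_ite_eq' (Finset.range ((i : ℕ) - (r + 1) + 1))]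
      rw [if_pos (Finset.mem_range.mpr (by omega))]
      rw [← hIH]
      rw [show (i : ℕ) - (r + 1) + 1 = (i : ℕ) - r by omega] at hIH ⊢
      rw [show ((i : ℕ) - r : ℕ) = ((i : ℕ) - (r + 1)) + 1 by omega, pow_succ]
      ring
    · -- processed gaps, interior
      intro v hv
      rcases Nat.lt_or_ge (v + 1) r with hvr | hvr
      · rw [hgw v (by omega), if_neg (by omega), if_neg (by omega)]
        exact hgap3 v hvr
      · have hv1 : v + 1 = r := by omega
        rw [hgw v (by omega), if_neg (by omega), if_pos (Or.inl hv1)]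
        rw [hgap4 v hv1, hgapr]
        have : (⟨v + 1, by omega⟩ : Fin (n - 1)) = ⟨r, hrlt⟩ := Fin.ext hv1
        rw [this]
    · -- just-processed gap
      intro v hv
      have hvr : v = r := by omega
      subst hvr
      rw [hgw v (by omega), if_pos rfl, hgapr]

end WDaux4

section WDaux5
variable {n : ℕ}

/-- `chainBound` extended to `ℕ` (helper). -/
noncomputable def cbN {n : ℕ} (μ : ℝ) (y : Fin n → ℝ) (v : ℕ) : ℝ :=
  if hv : v < n - 1 then chainBound μ y ⟨v, hv⟩ else 0

lemma chainBound_eq_sum (μ : ℝ) (y : Fin n → ℝ) (i : Fin (n - 1)) :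
    chainBound μ y i = ∑ j ∈ Finset.range ((i : ℕ) + 1), μ ^ j * gapN y ((i : ℕ) - j) := by
  unfold chainBound
  exact Finset.sum_congr rfl fun j hj => by rw [gapN_eq]

lemma chainBound_nonneg {μ : ℝ} (hμ0 : 0 ≤ μ) {y : Fin n → ℝ} (hmono : Monotone y)
    (i : Fin (n - 1)) : 0 ≤ chainBound μ y i := by
  rw [chainBound_eq_sum]
  exact Finset.sum_nonneg fun j _ => mul_nonneg (pow_nonneg hμ0 j) (gapN_nonneg hmono _)

lemma cbN_nonneg {μ : ℝ} (hμ0 : 0 ≤ μ) {y : Fin n → ℝ} (hmono : Monotone y) (v : ℕ) :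
    0 ≤ cbN μ y v := by
  unfold cbN; split
  · exact chainBound_nonneg hμ0 hmono _
  · exact le_refl 0

lemma geom_sum_le_inv {μ : ℝ} (hμ0 : 0 ≤ μ) (hμ1 : μ < 1) (m : ℕ) :
    ∑ j ∈ Finset.range m, μ ^ j ≤ 1 / (1 - μ) := by
  rw [geom_sum_eq (ne_of_lt hμ1) m]
  have h1 : (0:ℝ) < 1 - μ := by linarith
  have e : (μ ^ m - 1) / (μ - 1) = (1 - μ ^ m) / (1 - μ) := by
    rw [← neg_div_neg_eq]; ring_nf
  rw [e]
  have hm : 0 ≤ μ ^ m := pow_nonneg hμ0 m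
  have : (1:ℝ) - μ ^ m ≤ 1 := by linarith
  gcongr

/-- Preservation of the chain bound over one sweep. -/
lemma chainBound_next {μ C : ℝ} (hμ0 : 0 < μ) (hμ2 : μ ≤ 1 / 2) {y y' : Fin n → ℝ}
    (hgap : ∀ v : ℕ, gapN y' v = (1 - 2 * μ) * cbN μ y v + μ * cbN μ y (v + 1))
    (hbd : ∀ v : ℕ, cbN μ y v ≤ C) (hnn : ∀ v : ℕ, 0 ≤ cbN μ y v) (hC0 : 0 ≤ C) :
    ∀ i : Fin (n - 1), chainBound μ y' i ≤ C := by
  intro i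
  set k := (i : ℕ) with hk
  have hμ1 : μ < 1 := by linarith
  have h1μ : (0:ℝ) < 1 - μ := by linarith
  rw [chainBound_eq_sum]
  have hexp : ∀ j ∈ Finset.range (k + 1),
      μ ^ j * gapN y' (k - j)
        = (1 - 2 * μ) * (μ ^ j * cbN μ y (k - j)) + μ ^ j * (μ * cbN μ y (k - j + 1)) := by
    intro j _
    rw [hgap (k - j)]; ring
  rw [Finset.sum_congr rfl hexp, Finset.sum_add_distrib, ← Finset.mul_sum]
  set S := ∑ j ∈ Finset.range (k + 1), μ ^ j * cbN μ y (k - j) with hS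
  have hT : ∑ j ∈ Finset.range (k + 1), μ ^ j * (μ * cbN μ y (k - j + 1))
      ≤ μ * (μ * S) + μ * C := by
    rw [Finset.sum_range_succ']
    have e1 : ∀ j ∈ Finset.range k,
        μ ^ (j + 1) * (μ * cbN μ y (k - (j + 1) + 1)) = μ * (μ * (μ ^ j * cbN μ y (k - j))) := by
      intro j hj
      rw [Finset.mem_range] at hj
      rw [show k - (j + 1) + 1 = k - j by omega]
      ring
    rw [Finset.sum_congr rfl e1, ← Finset.mul_sum, ← Finset.mul_sum]
    have hS' : ∑ j ∈ Finset.range k, μ ^ j * cbN μ y (k - j) ≤ S := by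
      rw [hS, Finset.sum_range_succ]
      have : 0 ≤ μ ^ k * cbN μ y (k - k) := mul_nonneg (pow_nonneg hμ0.le k) (hnn _)
      linarith
    have h2 : μ * (μ * ∑ j ∈ Finset.range k, μ ^ j * cbN μ y (k - j)) ≤ μ * (μ * S) := by
      have := mul_le_mul_of_nonneg_left hS' (mul_nonneg hμ0.le hμ0.le)
      rw [← mul_assoc, ← mul_assoc]
      exact this
    have h3 : μ ^ 0 * (μ * cbN μ y (k - 0 + 1)) ≤ μ * C := by
      simp only [pow_zero, one_mul]
      exact mul_le_mul_of_nonneg_left (hbd _) hμ0.le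
    linarith
  have hSle : S ≤ C * (1 / (1 - μ)) := by
    have : S ≤ ∑ j ∈ Finset.range (k + 1), μ ^ j * C := by
      apply Finset.sum_le_sum
      intro j _
      exact mul_le_mul_of_nonneg_left (hbd _) (pow_nonneg hμ0.le j)
    rw [← Finset.sum_mul] at this
    calc S ≤ (∑ j ∈ Finset.range (k + 1), μ ^ j) * C := this
      _ ≤ (1 / (1 - μ)) * C := by
          apply mul_le_mul_of_nonneg_right (geom_sum_le_inv hμ0.le hμ1 _) hC0
      _ = C * (1 / (1 - μ)) := by ring
  have hSnn : 0 ≤ S :=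
    Finset.sum_nonneg fun j _ => mul_nonneg (pow_nonneg hμ0.le j) (hnn _)
  have key : (1 - 2 * μ) * S + (μ * (μ * S) + μ * C) ≤ C := by
    have e2 : (1 - 2 * μ) * S + (μ * (μ * S) + μ * C) = (1 - μ) ^ 2 * S + μ * C := by ring
    rw [e2]
    have h4 : (1 - μ) ^ 2 * S ≤ (1 - μ) ^ 2 * (C * (1 / (1 - μ))) :=
      mul_le_mul_of_nonneg_left hSle (sq_nonneg _)
    have e3 : (1 - μ) ^ 2 * (C * (1 / (1 - μ))) = (1 - μ) * C := by
      field_simp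
    rw [e3] at h4
    linarith
  calc (1 - 2 * μ) * S + ∑ j ∈ Finset.range (k + 1), μ ^ j * (μ * cbN μ y (k - j + 1))
      ≤ (1 - 2 * μ) * S + (μ * (μ * S) + μ * C) := by
        have h2μ : (0:ℝ) ≤ 1 - 2 * μ := by linarith
        linarith
    _ ≤ C := key

end WDaux5

section WDaux6
variable {n : ℕ}

/-- Contraction of the maximal gap over one sweep. -/
lemma gap_next_le (hn : 2 ≤ n) {μ M : ℝ} (hμ0 : 0 < μ) (hμ2 : μ ≤ 1 / 2) {y y' : Fin n → ℝ}
    (hgap : ∀ v : ℕ, gapN y' v = (1 - 2 * μ) * cbN μ y v + μ * cbN μ y (v + 1))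
    (hM : ∀ v : ℕ, gapN y v ≤ M) (hM0 : 0 ≤ M) (hmono : Monotone y) :
    ∀ v : ℕ, gapN y' v ≤ (1 - μ ^ (n - 1)) * M := by
  have hμ1 : μ < 1 := by linarith
  have h1μ : (0:ℝ) < 1 - μ := by linarith
  set G : ℝ := (1 - μ ^ (n - 1)) / (1 - μ) * M with hG
  have hpow1 : μ ^ (n - 1) ≤ 1 := pow_le_one₀ hμ0.le hμ1.le
  have hGnn : 0 ≤ G := by
    apply mul_nonneg _ hM0
    apply div_nonneg _ h1μ.le
    linarith
  have hcb : ∀ v : ℕ, cbN μ y v ≤ G := by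
    intro v
    unfold cbN; split
    · rename_i hv
      rw [chainBound_eq_sum]
      have hb1 : ∑ j ∈ Finset.range (v + 1), μ ^ j * gapN y (v - j)
          ≤ ∑ j ∈ Finset.range (v + 1), μ ^ j * M :=
        Finset.sum_le_sum fun j _ => mul_le_mul_of_nonneg_left (hM _) (pow_nonneg hμ0.le j)
      rw [← Finset.sum_mul] at hb1
      have hgeom : ∑ j ∈ Finset.range (v + 1), μ ^ j = (1 - μ ^ (v + 1)) / (1 - μ) := by
        rw [geom_sum_eq (ne_of_lt hμ1), ← neg_div_neg_eq]; ring_nf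
      have hple : μ ^ (n - 1) ≤ μ ^ (v + 1) :=
        pow_le_pow_of_le_one hμ0.le hμ1.le (by omega)
      have : (1 - μ ^ (v + 1)) / (1 - μ) ≤ (1 - μ ^ (n - 1)) / (1 - μ) := by
        gcongr
      calc ∑ j ∈ Finset.range (v + 1), μ ^ j * gapN y (v - j)
          ≤ (∑ j ∈ Finset.range (v + 1), μ ^ j) * M := hb1
        _ ≤ (1 - μ ^ (n - 1)) / (1 - μ) * M := by
            rw [hgeom]
            exact mul_le_mul_of_nonneg_right this hM0
    · exact hGnn
  intro v
  rw [hgap v]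
  have h2μ : (0:ℝ) ≤ 1 - 2 * μ := by linarith
  have hb2 : (1 - 2 * μ) * cbN μ y v + μ * cbN μ y (v + 1) ≤ (1 - 2 * μ) * G + μ * G := by
    have := mul_le_mul_of_nonneg_left (hcb v) h2μ
    have := mul_le_mul_of_nonneg_left (hcb (v + 1)) hμ0.le
    linarith
  have e : (1 - 2 * μ) * G + μ * G = (1 - μ) * G := by ring
  rw [e] at hb2
  have e2 : (1 - μ) * G = (1 - μ ^ (n - 1)) * M := by
    rw [hG]
    field_simp
  rw [e2] at hb2
  exact hb2

/-- The master sweep induction. -/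
lemma sweeps (hn : 2 ≤ n) {ε μ C M : ℝ} (hμ0 : 0 < μ) (hμ2 : μ ≤ 1 / 2)
    (hC : C < ε) (hC0 : 0 ≤ C) (hM0 : 0 ≤ M) (x0 : Fin n → ℝ) (hmono0 : Monotone x0)
    (hB : ∀ i, chainBound μ x0 i ≤ C) (hM : ∀ v : ℕ, gapN x0 v ≤ M) :
    ∀ k : ℕ,
      Monotone (wdTraj ε μ (phoneChain n hn) x0 (k * (n - 1))) ∧
      (∀ i, chainBound μ (wdTraj ε μ (phoneChain n hn) x0 (k * (n - 1))) i ≤ C) ∧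
      (∀ v : ℕ, gapN (wdTraj ε μ (phoneChain n hn) x0 (k * (n - 1))) v
        ≤ (1 - μ ^ (n - 1)) ^ k * M) := by
  have hμ1 : μ < 1 := by linarith
  have hq0 : (0:ℝ) ≤ 1 - μ ^ (n - 1) := by
    have := pow_le_one₀ hμ0.le hμ1.le (n := n - 1)
    linarith
  intro k
  induction k with
  | zero =>
    refine ⟨by simpa [wdTraj] using hmono0, fun i => by simpa [wdTraj] using hB i, ?_⟩
    intro v
    simpa [wdTraj] using hM v
  | succ k ih =>
    obtain ⟨hmono, hbd, hgap⟩ := ih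
    set y := wdTraj ε μ (phoneChain n hn) x0 (k * (n - 1)) with hy
    have hmod : (k * (n - 1)) % (n - 1) = 0 := Nat.mul_mod_left k (n - 1)
    obtain ⟨hmono', hseen', hgap3, hgap4⟩ :=
      sweep_inv hn hμ0 hμ2 hC x0 (k * (n - 1)) hmod hmono hbd (n - 1) (le_refl _)
    have et : k * (n - 1) + (n - 1) = (k + 1) * (n - 1) := by ring
    rw [et] at hmono' hgap3 hgap4
    set y' := wdTraj ε μ (phoneChain n hn) x0 ((k + 1) * (n - 1)) with hy'
    have hgapf : ∀ v : ℕ, gapN y' v = (1 - 2 * μ) * cbN μ y v + μ * cbN μ y (v + 1) := by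
      intro v
      rcases Nat.lt_trichotomy (v + 1) (n - 1) with h1 | h1 | h1
      · rw [hgap3 v h1]
        rw [cbN, dif_pos (by omega : v < n - 1), cbN, dif_pos h1]
      · rw [hgap4 v h1]
        rw [cbN, dif_pos (by omega : v < n - 1), cbN, dif_neg (by omega)]
        ring
      · rw [gapN, dif_neg (by omega), cbN, dif_neg (by omega), cbN, dif_neg (by omega)]
        ring
    have hcbd : ∀ v : ℕ, cbN μ y v ≤ C := by
      intro v; unfold cbN; split
      · exact hbd _
      · exact hC0
    have hcnn : ∀ v : ℕ, 0 ≤ cbN μ y v := cbN_nonneg hμ0.le hmono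
    refine ⟨hmono', chainBound_next hμ0 hμ2 hgapf hcbd hcnn hC0, ?_⟩
    have hMk : (0:ℝ) ≤ (1 - μ ^ (n - 1)) ^ k * M := mul_nonneg (pow_nonneg hq0 k) hM0
    have := gap_next_le hn hμ0 hμ2 hgapf hgap hMk hmono
    intro v
    calc gapN y' v ≤ (1 - μ ^ (n - 1)) * ((1 - μ ^ (n - 1)) ^ k * M) := this v
      _ = (1 - μ ^ (n - 1)) ^ (k + 1) * M := by ring
end WDaux6

section WDaux7
variable {n : ℕ}

lemma wdStep_mem_Icc {ε μ : ℝ} (hμ0 : 0 ≤ μ) (hμ1 : μ ≤ 1) (i j : Fin n) (x : Fin n → ℝ)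
    {lo hi : ℝ} (h : ∀ l, x l ∈ Set.Icc lo hi) (l : Fin n) :
    wdStep ε μ i j x l ∈ Set.Icc lo hi := by
  unfold wdStep
  split_ifs with hc
  · obtain ⟨hi1, hi2⟩ := h i
    obtain ⟨hj1, hj2⟩ := h j
    by_cases h1 : l = j
    · subst h1
      rw [Function.update_self]
      constructor <;> nlinarith
    · rw [Function.update_of_ne h1]
      by_cases h2 : l = i
      · subst h2
        rw [Function.update_self]
        constructor <;> nlinarith
      · rw [Function.update_of_ne h2]
        exact h l
  · exact h l

lemma sum_wdStep {ε μ : ℝ} (i j : Fin n) (hij : i ≠ j) (x : Fin n → ℝ) :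
    ∑ l, wdStep ε μ i j x l = ∑ l, x l := by
  unfold wdStep
  split_ifs with hc
  · rw [Finset.sum_update_of_mem (Finset.mem_univ j)]
    rw [Finset.sum_update_of_mem (by simp [hij] : i ∈ Finset.univ \ {j})]
    have e1 : ∑ l, x l = ∑ l ∈ Finset.univ \ {j}, x l + x j := by
      rw [Finset.sum_eq_sum_sdiff_singleton_add (Finset.mem_univ j)]
    have e2 : ∑ l ∈ Finset.univ \ {j}, x l
        = ∑ l ∈ (Finset.univ \ {j}) \ {i}, x l + x i := by
      rw [Finset.sum_eq_sum_sdiff_singleton_add (by simp [hij] : i ∈ Finset.univ \ {j})]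
    rw [e1, e2]
    ring
  · rfl

lemma phoneChain_ne (hn : 2 ≤ n) (t : ℕ) : (phoneChain n hn t).1 ≠ (phoneChain n hn t).2 := by
  intro hc
  have := congrArg Fin.val hc
  simp [phoneChain] at this

lemma traj_sum (hn : 2 ≤ n) {ε μ : ℝ} (x0 : Fin n → ℝ) (t : ℕ) :
    ∑ l, wdTraj ε μ (phoneChain n hn) x0 t l = ∑ l, x0 l := by
  induction t with
  | zero => rfl
  | succ t ih =>
    rw [wdTraj, sum_wdStep _ _ (phoneChain_ne hn t)]
    exact ih

lemma traj_conf (hn : 2 ≤ n) {ε μ : ℝ} (hμ0 : 0 ≤ μ) (hμ1 : μ ≤ 1) (x0 : Fin n → ℝ)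
    {lo hi : ℝ} (s : ℕ) (hs : ∀ l, wdTraj ε μ (phoneChain n hn) x0 s l ∈ Set.Icc lo hi) :
    ∀ t, s ≤ t → ∀ l, wdTraj ε μ (phoneChain n hn) x0 t l ∈ Set.Icc lo hi := by
  intro t ht
  induction t, ht using Nat.le_induction with
  | base => exact hs
  | succ t ht ih =>
    intro l
    rw [wdTraj]
    exact wdStep_mem_Icc hμ0 hμ1 _ _ _ ih l

lemma range_eq_sum (hn : 2 ≤ n) (x : Fin n → ℝ) :
    x ⟨n - 1, Nat.sub_lt (Nat.zero_lt_of_lt hn) Nat.one_pos⟩ - x ⟨0, Nat.zero_lt_of_lt hn⟩ = ∑ i : Fin (n - 1), gap x i := by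
  have e1 : ∀ i : Fin (n - 1), gap x i = padded x ((i : ℕ) + 1) - padded x (i : ℕ) := by
    intro i
    unfold gap
    rw [padded_eq x ((i : ℕ) + 1) (by have := i.isLt; omega), padded_eq x (i : ℕ) (by have := i.isLt; omega)]
  rw [Finset.sum_congr rfl fun i _ => e1 i]
  rw [Fin.sum_univ_eq_sum_range (fun v => padded x (v + 1) - padded x v) (n - 1)]
  rw [Finset.sum_range_sub (padded x) (n - 1)]
  rw [← padded_eq x (n - 1) (by omega), ← padded_eq x 0 (by omega)]

end WDaux7

section WDaux8
variable {n : ℕ}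

lemma gapN_le_maxGap (hn : 2 ≤ n) {x0 : Fin n → ℝ} (hpos : 0 ≤ maxGap x0) (v : ℕ) :
    gapN x0 v ≤ maxGap x0 := by
  unfold gapN
  split
  · exact le_ciSup (Set.Finite.bddAbove (Set.finite_range _)) _
  · exact hpos

lemma chainBound_le_bound (hn : 2 ≤ n) {μ : ℝ} (hμ0 : 0 < μ) (hμ1 : μ < 1)
    (x0 : Fin n → ℝ) (hord : Monotone x0) (hpos : 0 < maxGap x0) (i : Fin (n - 1)) :
    chainBound μ x0 i
      ≤ ((1 - μ ^ ⌈(x0 ⟨n - 1, Nat.sub_lt (Nat.zero_lt_of_lt hn) Nat.one_pos⟩ - x0 ⟨0, Nat.zero_lt_of_lt hn⟩) / maxGap x0⌉₊) / (1 - μ))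
          * maxGap x0 := by
  have h1μ : (0:ℝ) < 1 - μ := by linarith
  set G := maxGap x0 with hG
  set m := ⌈(x0 ⟨n - 1, by omega⟩ - x0 ⟨0, by omega⟩) / maxGap x0⌉₊ with hm
  set k := (i : ℕ) with hk
  have hgN : ∀ v : ℕ, gapN x0 v ≤ G := gapN_le_maxGap hn hpos.le
  have hgNnn : ∀ v : ℕ, 0 ≤ gapN x0 v := gapN_nonneg hord
  have hRm : x0 ⟨n - 1, by omega⟩ - x0 ⟨0, by omega⟩ ≤ (m : ℝ) * G := by
    have h1 : (x0 ⟨n - 1, by omega⟩ - x0 ⟨0, by omega⟩) / G ≤ (m : ℝ) := Nat.le_ceil _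
    rw [div_le_iff₀ hpos] at h1
    linarith [h1]
  have hsum : ∑ j ∈ Finset.range (k + 1), gapN x0 (k - j) ≤ (m : ℝ) * G := by
    have e1 : ∑ j ∈ Finset.range (k + 1), gapN x0 (k - j)
        = ∑ j ∈ Finset.range (k + 1), gapN x0 j := by
      have := Finset.sum_range_reflect (fun j => gapN x0 j) (k + 1)
      simpa using this
    rw [e1]
    have e2 : ∑ j ∈ Finset.range (k + 1), gapN x0 j ≤ ∑ j ∈ Finset.range (n - 1), gapN x0 j := by
      apply Finset.sum_le_sum_of_subset_of_nonneg
      · apply Finset.range_subset_range.mpr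
        have := i.isLt; omega
      · intro j _ _; exact hgNnn j
    have e3 : ∑ j ∈ Finset.range (n - 1), gapN x0 j = ∑ q : Fin (n - 1), gap x0 q := by
      rw [← Fin.sum_univ_eq_sum_range (fun v => gapN x0 v) (n - 1)]
      exact Finset.sum_congr rfl fun q _ => (gapN_coe x0 q).symm
    rw [e3] at e2
    rw [← range_eq_sum hn x0] at e2
    exact le_trans e2 hRm
  rw [chainBound_eq_sum]
  have split1 : ∑ j ∈ Finset.range (k + 1), μ ^ j * gapN x0 (k - j)
      = ∑ j ∈ Finset.range (k + 1), (μ ^ j - μ ^ m) * gapN x0 (k - j)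
        + μ ^ m * ∑ j ∈ Finset.range (k + 1), gapN x0 (k - j) := by
    rw [Finset.mul_sum, ← Finset.sum_add_distrib]
    exact Finset.sum_congr rfl fun j _ => by ring
  rw [split1]
  have hmono2 : ∀ {a b : ℕ}, a ≤ b → μ ^ b ≤ μ ^ a := fun hab =>
    pow_le_pow_of_le_one hμ0.le hμ1.le hab
  have step2 : ∑ j ∈ Finset.range (k + 1), (μ ^ j - μ ^ m) * gapN x0 (k - j)
      ≤ ∑ j ∈ Finset.range (k + 1), max (μ ^ j - μ ^ m) 0 * G := by
    apply Finset.sum_le_sum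
    intro j _
    rcases le_total (μ ^ m) (μ ^ j) with hc | hc
    · have h0 : 0 ≤ μ ^ j - μ ^ m := by linarith
      rw [max_eq_left h0]
      exact mul_le_mul_of_nonneg_left (hgN _) h0
    · have h0 : μ ^ j - μ ^ m ≤ 0 := by linarith
      rw [max_eq_right h0]
      have := hgNnn (k - j)
      nlinarith
  have step3 : ∑ j ∈ Finset.range (k + 1), max (μ ^ j - μ ^ m) 0 * G
      ≤ ∑ j ∈ Finset.range m, (μ ^ j - μ ^ m) * G := by
    have e4 : ∀ j : ℕ, max (μ ^ j - μ ^ m) 0 * G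
        = if j < m then (μ ^ j - μ ^ m) * G else 0 := by
      intro j
      split_ifs with hj
      · rw [max_eq_left (by have := hmono2 (le_of_lt hj); linarith)]
      · rw [max_eq_right (by have := hmono2 (by omega : m ≤ j); linarith), zero_mul]
    rw [Finset.sum_congr rfl fun j _ => e4 j, ← Finset.sum_filter]
    apply Finset.sum_le_sum_of_subset_of_nonneg
    · intro a ha
      simp only [Finset.mem_filter, Finset.mem_range] at ha ⊢
      omega
    · intro j hj _
      rw [Finset.mem_range] at hj
      have := hmono2 (le_of_lt hj)
      exact mul_nonneg (by linarith) hpos.le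
  have step4 : ∑ j ∈ Finset.range m, (μ ^ j - μ ^ m) * G
      = ((1 - μ ^ m) / (1 - μ) - (m : ℝ) * μ ^ m) * G := by
    rw [← Finset.sum_mul]
    congr 1
    rw [Finset.sum_sub_distrib, Finset.sum_const, Finset.card_range, nsmul_eq_mul]
    congr 1
    rw [geom_sum_eq (ne_of_lt hμ1), ← neg_div_neg_eq]
    ring_nf
  have hT : μ ^ m * ∑ j ∈ Finset.range (k + 1), gapN x0 (k - j) ≤ μ ^ m * ((m : ℝ) * G) :=
    mul_le_mul_of_nonneg_left hsum (pow_nonneg hμ0.le m)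
  have efin : ((1 - μ ^ m) / (1 - μ) - (m : ℝ) * μ ^ m) * G + μ ^ m * ((m : ℝ) * G)
      = (1 - μ ^ m) / (1 - μ) * G := by ring
  rw [step4] at step3
  linarith [step2.trans step3]

end WDaux8


/-- Corollary 1: with `m := ⌈range(x(0)) / max Δx(0)⌉`, the phone-chain
bound is at most `((1 - μ^m)/(1 - μ)) · max Δx(0)`; consequently, if `ε` exceeds this
quantity, the phone chain of closest drives the process to consensus. -/
theorem wd_phoneChain_corollary {n : ℕ} (hn : 2 ≤ n) (ε μ : ℝ)
    (hε : 0 < ε) (hμ0 : 0 < μ) (hμ : μ ≤ 1 / 2)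
    (x0 : Fin n → ℝ) (hord : Monotone x0) (hpos : 0 < maxGap x0) :
    (⨆ i : Fin (n - 1), chainBound μ x0 i)
        ≤ ((1 - μ ^ ⌈(x0 ⟨n - 1, by omega⟩ - x0 ⟨0, by omega⟩) / maxGap x0⌉₊) / (1 - μ))
            * maxGap x0 ∧
    (((1 - μ ^ ⌈(x0 ⟨n - 1, by omega⟩ - x0 ⟨0, by omega⟩) / maxGap x0⌉₊) / (1 - μ))
            * maxGap x0 < ε →
      ∃ c : ℝ, ∀ i : Fin n,
        Tendsto (fun t => wdTraj ε μ (phoneChain n hn) x0 t i) atTop (nhds c)) := by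
  have hμ1 : μ < 1 := by linarith
  have hne : Nonempty (Fin (n - 1)) := ⟨⟨0, by omega⟩⟩
  have hbd : ∀ i, chainBound μ x0 i
      ≤ ((1 - μ ^ ⌈(x0 ⟨n - 1, by omega⟩ - x0 ⟨0, by omega⟩) / maxGap x0⌉₊) / (1 - μ))
          * maxGap x0 := chainBound_le_bound hn hμ0 hμ1 x0 hord hpos
  refine ⟨ciSup_le hbd, ?_⟩
  intro hεB
  set B := ((1 - μ ^ ⌈(x0 ⟨n - 1, by omega⟩ - x0 ⟨0, by omega⟩) / maxGap x0⌉₊) / (1 - μ))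
      * maxGap x0 with hB
  have hB0 : 0 ≤ B := le_trans (chainBound_nonneg hμ0.le hord ⟨0, by omega⟩) (hbd _)
  have hM : ∀ v : ℕ, gapN x0 v ≤ maxGap x0 := gapN_le_maxGap hn hpos.le
  have hsw := sweeps hn hμ0 hμ hεB hB0 hpos.le x0 hord hbd hM
  set q : ℝ := 1 - μ ^ (n - 1) with hqdef
  have hq0 : 0 ≤ q := by
    have := pow_le_one₀ hμ0.le hμ1.le (n := n - 1)
    rw [hqdef]; linarith
  have hq1 : q < 1 := by
    have := pow_pos hμ0 (n - 1)
    rw [hqdef]; linarith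
  refine ⟨(∑ l, x0 l) / n, fun i => ?_⟩
  rw [Metric.tendsto_atTop]
  intro δ hδ
  have hqk : Tendsto (fun k : ℕ => (n : ℝ) * (q ^ k * maxGap x0)) atTop (nhds 0) := by
    have h1 := (tendsto_pow_atTop_nhds_zero_of_lt_one hq0 hq1).mul_const (maxGap x0)
    have h2 := h1.const_mul (n : ℝ)
    simpa using h2
  obtain ⟨k, hk⟩ := (hqk.eventually (gt_mem_nhds hδ)).exists
  refine ⟨k * (n - 1), fun t ht => ?_⟩
  obtain ⟨hmonk, hbdk, hgapk⟩ := hsw k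
  set y := wdTraj ε μ (phoneChain n hn) x0 (k * (n - 1)) with hy
  set lo := y ⟨0, by omega⟩ with hlo
  set hi := y ⟨n - 1, by omega⟩ with hhi
  have hmem : ∀ l, y l ∈ Set.Icc lo hi := by
    intro l
    constructor
    · exact hmonk (show (⟨0, by omega⟩ : Fin n) ≤ l by simp [Fin.le_def])
    · exact hmonk (show l ≤ (⟨n - 1, by omega⟩ : Fin n) by
        simp [Fin.le_def]; have := l.isLt; omega)
  have hconf := traj_conf hn hμ0.le (by linarith) x0 (k * (n - 1)) hmem
  have hcmem : (∑ l, x0 l) / n ∈ Set.Icc lo hi := by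
    have hsum : ∑ l, y l = ∑ l, x0 l := traj_sum hn x0 (k * (n - 1))
    have hcard : (Finset.univ : Finset (Fin n)).card = n := by simp
    have h1 : (n : ℝ) * lo ≤ ∑ l, x0 l := by
      rw [← hsum]
      calc (n : ℝ) * lo = ∑ _l : Fin n, lo := by
            rw [Finset.sum_const, hcard, nsmul_eq_mul]
        _ ≤ ∑ l, y l := Finset.sum_le_sum fun l _ => (hmem l).1
    have h2 : ∑ l, x0 l ≤ (n : ℝ) * hi := by
      rw [← hsum]
      calc ∑ l, y l ≤ ∑ _l : Fin n, hi := Finset.sum_le_sum fun l _ => (hmem l).2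
        _ = (n : ℝ) * hi := by rw [Finset.sum_const, hcard, nsmul_eq_mul]
    have hn0 : (0 : ℝ) < n := by exact_mod_cast Nat.lt_of_lt_of_le Nat.zero_lt_two hn
    constructor
    · rw [le_div_iff₀ hn0]; linarith
    · rw [div_le_iff₀ hn0]; linarith
  have hwidth : hi - lo ≤ (n : ℝ) * (q ^ k * maxGap x0) := by
    have e1 : hi - lo = ∑ j : Fin (n - 1), gap y j := range_eq_sum hn y
    have e2 : ∑ j : Fin (n - 1), gap y j ≤ ∑ _j : Fin (n - 1), q ^ k * maxGap x0 := by
      apply Finset.sum_le_sum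
      intro j _
      rw [gapN_coe]
      exact hgapk (j : ℕ)
    have e3 : ∑ _j : Fin (n - 1), q ^ k * maxGap x0 = ((n - 1 : ℕ) : ℝ) * (q ^ k * maxGap x0) := by
      rw [Finset.sum_const, nsmul_eq_mul]
      congr 1
      simp
    have e4 : ((n - 1 : ℕ) : ℝ) ≤ (n : ℝ) := by
      have : (n - 1 : ℕ) ≤ n := by omega
      exact_mod_cast this
    have e5 : 0 ≤ q ^ k * maxGap x0 := mul_nonneg (pow_nonneg hq0 k) hpos.le
    rw [e1]
    calc ∑ j : Fin (n - 1), gap y j ≤ ((n - 1 : ℕ) : ℝ) * (q ^ k * maxGap x0) := by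
          rw [← e3]; exact e2
      _ ≤ (n : ℝ) * (q ^ k * maxGap x0) := mul_le_mul_of_nonneg_right e4 e5
  have hti := hconf t ht i
  rw [Real.dist_eq]
  have h6 : |wdTraj ε μ (phoneChain n hn) x0 t i - (∑ l, x0 l) / n| ≤ hi - lo := by
    rw [abs_sub_le_iff]
    obtain ⟨ha, hb⟩ := hti
    obtain ⟨hc, hd⟩ := hcmem
    constructor <;> linarith
  calc |wdTraj ε μ (phoneChain n hn) x0 t i - (∑ l, x0 l) / n| ≤ hi - lo := h6
    _ ≤ (n : ℝ) * (q ^ k * maxGap x0) := hwidth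
    _ < δ := hk
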